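/- Let H be a group of diagonal unitary matrices on ℂ^N = (ℂ²)^⊗n acting by phases on the computational basis, and suppose H acts non-trivially on every qubit (for each k there exists h ∈ H whose k-th single-qubit factor is not ±I). Then any f = f₁⊗…⊗fₙ ∈ SU(2)^{×n} normalizing H (fH f^{-1} = H as sets of operators up to overall phase ±1) satisfies: each fₖ is either diagonal or anti-diagonal (fₖ = [[α,0],[0,α*]] or fₖ = [[0,β],[-β*,0]]). -/

import Mathlib

open scoped ComplexConjugate
open Matrix

/-- The diagonal SU(2) element `diag(e^{iφ}, e^{-iφ})`. -/
noncomputable def diagSU2 (φ : ℝ) : Matrix (Fin 2) (Fin 2) ℂ :=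
  !![Complex.exp (Complex.I * φ), 0; 0, Complex.exp (-(Complex.I * φ))]

/-- Let `H` (a set of parameter tuples `(φ₁,…,φₙ,θ)`) be a group of diagonal
local unitaries acting non-trivially on every qubit.  If
`f = f₁⊗…⊗fₙ ∈ SU(2)^{×n}`, with `fₖ = [[αₖ,βₖ],[-βₖ*,αₖ*]]`, normalizes `H`
(each single-qubit factor relation holding up to a sign `±1`), then each `fₖ`
is diagonal (`βₖ = 0`) or anti-diagonal (`αₖ = 0`). -/
theorem stmt_5 {n : ℕ} (H : Set ((Fin n → ℝ) × ℝ)) (α β : Fin n → ℂ)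
    (hSU : ∀ k, Complex.normSq (α k) + Complex.normSq (β k) = 1)
    (hnontriv : ∀ k : Fin n, ∃ h ∈ H, ∀ m : ℤ, h.1 k ≠ m * Real.pi)
    (hnorm : ∀ h ∈ H, ∃ h' ∈ H, ∀ k : Fin n, ∃ ε : ℂ, (ε = 1 ∨ ε = -1) ∧
      !![α k, β k; -conj (β k), conj (α k)] * diagSU2 (h.1 k) =
        ε • (diagSU2 (h'.1 k) * !![α k, β k; -conj (β k), conj (α k)]))
    (hnorm' : ∀ h ∈ H, ∃ h' ∈ H, ∀ k : Fin n, ∃ ε : ℂ, (ε = 1 ∨ ε = -1) ∧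
      diagSU2 (h.1 k) * !![α k, β k; -conj (β k), conj (α k)] =
        ε • (!![α k, β k; -conj (β k), conj (α k)] * diagSU2 (h'.1 k))) :
    ∀ k : Fin n, β k = 0 ∨ α k = 0 := by
  intro k
  by_contra hc
  push_neg at hc
  obtain ⟨hb, ha⟩ := hc
  obtain ⟨h, hH, hφ⟩ := hnontriv k
  obtain ⟨h', _, hk⟩ := hnorm h hH
  obtain ⟨ε, hε, heq⟩ := hk k
  have e00 := congrFun (congrFun heq 0) 0
  have e01 := congrFun (congrFun heq 0) 1
  simp [diagSU2, Matrix.mul_apply, Fin.sum_univ_two] at e00 e01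
  -- e00 : α k * exp(I φ) = ε * (exp(I φ') * α k)
  -- e01 : β k * exp(-(I φ)) = ε * (exp(I φ') * β k)
  have key : Complex.exp (Complex.I * (h.1 k)) = Complex.exp (-(Complex.I * (h.1 k))) := by
    have h1 : Complex.exp (Complex.I * (h.1 k)) = ε * Complex.exp (Complex.I * (h'.1 k)) := by
      rcases mul_left_cancel₀ ha (by linear_combination e00 :
        α k * Complex.exp (Complex.I * (h.1 k)) =
          α k * (ε * Complex.exp (Complex.I * (h'.1 k)))) with h1
      exact h1
    have h2 : Complex.exp (-(Complex.I * (h.1 k))) = ε * Complex.exp (Complex.I * (h'.1 k)) := by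
      rcases mul_left_cancel₀ hb (by linear_combination e01 :
        β k * Complex.exp (-(Complex.I * (h.1 k))) =
          β k * (ε * Complex.exp (Complex.I * (h'.1 k)))) with h2
      exact h2
    rw [h1, h2]
  have : Complex.exp (2 * Complex.I * (h.1 k)) = 1 := by
    have := congrArg (· * Complex.exp (Complex.I * (h.1 k))) key
    rw [← Complex.exp_add, ← Complex.exp_add] at this
    simpa [two_mul, ← Complex.exp_add, add_mul] using this.trans (by simp)
  rw [Complex.exp_eq_one_iff] at this
  obtain ⟨m, hm⟩ := this
  apply hφ m
  have : (↑(h.1 k) : ℂ) = ↑m * ↑Real.pi := by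
    have hIne : (Complex.I : ℂ) ≠ 0 := Complex.I_ne_zero
    have : (2:ℂ) * (h.1 k) * Complex.I = (m : ℂ) * (2 * Real.pi * Complex.I) := by
      linear_combination hm
    have h2 : (2:ℂ) * (h.1 k) = (m:ℂ) * (2 * Real.pi) := by
      have := mul_right_cancel₀ hIne (by linear_combination this :
        ((2:ℂ) * (h.1 k)) * Complex.I = ((m:ℂ) * (2 * Real.pi)) * Complex.I)
      exact this
    linear_combination h2 / 2
  exact_mod_cast this
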